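/- Let X be an n-dimensional polyhedral real normed space (the unit ball is a polytope), and Y ⊆ X a k-dimensional subspace (1 ≤ k ≤ n−1). Suppose some minimal projection P_0 ∈ P_min(X,Y) has at most m norming pairs (x,f) ∈ ext B_X × ext B_{X*} with f(P_0(x)) = ‖P_0‖. Then the affine dimension of P_min(X,Y) is at least k(n−k) − m + 1. -/

import Mathlib

open Metric Module

set_option maxHeartbeats 2000000

noncomputable section

variable {X : Type*} [NormedAddCommGroup X] [NormedSpace ℝ X]

def IsProjOnto (Y : Submodule ℝ X) (P : X →L[ℝ] X) : Prop :=
  (∀ x, P x ∈ Y) ∧ ∀ y ∈ Y, P y = y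

def relProjConst (Y : Submodule ℝ X) : ℝ :=
  sInf {c | ∃ P : X →L[ℝ] X, IsProjOnto Y P ∧ ‖P‖ = c}

def MinProjSet (Y : Submodule ℝ X) : Set (X →L[ℝ] X) :=
  {P | IsProjOnto Y P ∧ ‖P‖ = relProjConst Y}

def adim {M : Type*} [AddCommGroup M] [Module ℝ M] (S : Set M) : ℕ :=
  finrank ℝ (affineSpan ℝ S).direction

/-- A normed space is polyhedral if its closed unit ball is a convex polytope. -/
def IsPolyhedralSpace (X : Type*) [NormedAddCommGroup X] [NormedSpace ℝ X] : Prop :=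
  ∃ s : Finset X, closedBall (0 : X) 1 = convexHull ℝ (s : Set X)

/-! ### Auxiliary lemmas -/

lemma aux_eps' {α : Type*} (t : Finset α) (g h : α → ℝ) (hg : ∀ x ∈ t, 0 < g x) :
    ∃ ε : ℝ, 0 < ε ∧ ∀ x ∈ t, ε * h x < g x := by
  classical
  rcases t.eq_empty_or_nonempty with rfl | ht
  · exact ⟨1, one_pos, by simp⟩
  · refine ⟨t.inf' ht (fun x => g x / (|h x| + 1)), ?_, ?_⟩
    · rw [Finset.lt_inf'_iff]
      intro x hx
      exact div_pos (hg x hx) (by positivity)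
    · intro x hx
      set ε := t.inf' ht (fun x => g x / (|h x| + 1)) with hε
      have hεpos : 0 < ε := by
        rw [hε, Finset.lt_inf'_iff]; intro y hy; exact div_pos (hg y hy) (by positivity)
      have h1 : ε ≤ g x / (|h x| + 1) := Finset.inf'_le _ hx
      calc ε * h x ≤ ε * |h x| := mul_le_mul_of_nonneg_left (le_abs_self _) hεpos.le
        _ < ε * (|h x| + 1) := by nlinarith
        _ ≤ (g x / (|h x| + 1)) * (|h x| + 1) :=
            mul_le_mul_of_nonneg_right h1 (by positivity)
        _ = g x := div_mul_cancel₀ _ (by positivity)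

lemma hull_extremePoints' {E : Type*} [NormedAddCommGroup E] [NormedSpace ℝ E]
    {A : Set E} (hA : IsCompact A) (hconv : Convex ℝ A)
    (hfin : (A.extremePoints ℝ).Finite) : convexHull ℝ (A.extremePoints ℝ) = A := by
  conv_rhs => rw [← closure_convexHull_extremePoints hA hconv]
  exact ((hfin.isCompact_convexHull ℝ).isClosed.closure_eq).symm

lemma mem_dual_ball_iff' {E : Type*} [NormedAddCommGroup E] [NormedSpace ℝ E]
    {s : Finset E} (hs : closedBall (0:E) 1 = convexHull ℝ (s : Set E))
    (f : E →L[ℝ] ℝ) : f ∈ closedBall (0 : E →L[ℝ] ℝ) 1 ↔ ∀ x ∈ s, f x ≤ 1 := by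
  rw [mem_closedBall_zero_iff]
  constructor
  · intro hf x hx
    have hxball : x ∈ closedBall (0:E) 1 := by
      rw [hs]; exact subset_convexHull ℝ _ hx
    rw [mem_closedBall_zero_iff] at hxball
    calc f x ≤ |f x| := le_abs_self _
      _ ≤ ‖f‖ * ‖x‖ := f.le_opNorm x
      _ ≤ 1 * 1 := mul_le_mul hf hxball (norm_nonneg _) zero_le_one
      _ = 1 := one_mul 1
  · intro hf
    have hball : ∀ x ∈ closedBall (0:E) 1, f x ≤ 1 := by
      rw [hs]
      exact convexHull_min hf (convex_halfSpace_le ⟨f.map_add, f.map_smul⟩ 1)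
    refine f.opNorm_le_of_unit_norm zero_le_one (fun x hx => ?_)
    have h1 : f x ≤ 1 := hball x (by simp [mem_closedBall_zero_iff, hx.le])
    have h2 : f (-x) ≤ 1 := hball (-x) (by simp [mem_closedBall_zero_iff, hx.le])
    rw [map_neg] at h2
    rw [Real.norm_eq_abs, abs_le]
    constructor <;> linarith

lemma dual_extremePoints_finite {E : Type*} [NormedAddCommGroup E] [NormedSpace ℝ E]
    [FiniteDimensional ℝ E] {s : Finset E}
    (hs : closedBall (0:E) 1 = convexHull ℝ (s : Set E)) :
    ((closedBall (0 : E →L[ℝ] ℝ) 1).extremePoints ℝ).Finite := by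
  classical
  set B' := closedBall (0 : E →L[ℝ] ℝ) 1 with hB'
  set Φ : (E →L[ℝ] ℝ) → Finset E := fun f => s.filter (fun x => f x = 1) with hΦ
  have hspan : ∀ f ∈ B'.extremePoints ℝ, Submodule.span ℝ ((Φ f : Finset E) : Set E) = ⊤ := by
    intro f hf
    have hfB' : f ∈ B' := extremePoints_subset hf
    by_contra hlt
    obtain ⟨d, hd0, hdbot⟩ := Submodule.exists_dual_map_eq_bot_of_lt_top
      (lt_top_iff_ne_top.2 hlt) inferInstance
    set D : E →L[ℝ] ℝ := LinearMap.toContinuousLinearMap d with hD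
    have hDzero : ∀ x ∈ Φ f, D x = 0 := by
      intro x hx
      have hxmem : (x : E) ∈ Submodule.span ℝ ((Φ f : Finset E) : Set E) :=
        Submodule.subset_span hx
      have h2 : d x ∈ (Submodule.span ℝ ((Φ f : Finset E) : Set E)).map d :=
        Submodule.mem_map_of_mem hxmem
      rw [hdbot, Submodule.mem_bot] at h2
      simpa [hD, LinearMap.coe_toContinuousLinearMap'] using h2
    obtain ⟨ε, hε, hεlt⟩ := aux_eps' (s.filter (fun x => ¬ f x = 1))
      (fun x => 1 - f x) (fun x => |D x|) (by
        intro x hx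
        rw [Finset.mem_filter] at hx
        have h1 := (mem_dual_ball_iff' hs f).1 hfB' x hx.1
        rcases lt_or_eq_of_le h1 with h | h
        · linarith
        · exact absurd h hx.2)
    have hmem : ∀ (σ : ℝ), |σ| ≤ ε → f + σ • D ∈ B' := by
      intro σ hσ
      rw [mem_dual_ball_iff' hs]
      intro x hx
      by_cases hx1 : f x = 1
      · have : D x = 0 := hDzero x (by simp [hΦ, Finset.mem_filter, hx, hx1])
        simp [this, hx1]
      · have h1 : ε * |D x| < 1 - f x := hεlt x (by simp [Finset.mem_filter, hx, hx1])
        have h2 : σ * D x ≤ |σ * D x| := le_abs_self _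
        have h3 : |σ * D x| = |σ| * |D x| := abs_mul _ _
        have h4 : |σ| * |D x| ≤ ε * |D x| :=
          mul_le_mul_of_nonneg_right hσ (abs_nonneg _)
        have h5 : (f + σ • D) x = f x + σ * D x := by
          simp [ContinuousLinearMap.add_apply, ContinuousLinearMap.smul_apply, smul_eq_mul]
        rw [h5]; linarith
    have hm1 : f + (-ε) • D ∈ B' := hmem (-ε) (by rw [abs_neg, abs_of_pos hε])
    have hm2 : f + ε • D ∈ B' := hmem ε (by rw [abs_of_pos hε])
    have hopen : f ∈ openSegment ℝ (f + (-ε) • D) (f + ε • D) := by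
      refine ⟨1/2, 1/2, by norm_num, by norm_num, by norm_num, ?_⟩
      module
    have heq := hf.2 hm2 hm1 (by rwa [openSegment_symm] at hopen)
    have hD0 : D = 0 := by
      have h6 : ε • D = 0 := add_eq_left.1 heq
      rcases smul_eq_zero.1 h6 with h | h
      · exact absurd h hε.ne'
      · exact h
    exact hd0 ((LinearEquiv.map_eq_zero_iff _).1 (hD ▸ hD0))
  have hinj : Set.InjOn Φ (B'.extremePoints ℝ) := by
    intro f hf g hg hfg
    have h1 := hspan f hf
    refine ContinuousLinearMap.coe_injective (LinearMap.ext_on h1 (fun x hx => ?_))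
    rw [Finset.mem_coe] at hx
    have hx2 : x ∈ Φ g := by rw [← hfg]; exact hx
    rw [hΦ, Finset.mem_filter] at hx hx2
    simp only [ContinuousLinearMap.coe_coe]
    rw [hx.2, hx2.2]
  have himage : Φ '' (B'.extremePoints ℝ) ⊆ ↑s.powerset := by
    intro t ht
    obtain ⟨f, _, rfl⟩ := ht
    simp only [Finset.mem_coe, Finset.mem_powerset, hΦ]
    exact Finset.filter_subset _ _
  exact Set.Finite.of_finite_image (Set.Finite.subset (s.powerset).finite_toSet himage) hinj

lemma norm_le_dual {E : Type*} [NormedAddCommGroup E] [NormedSpace ℝ E]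
    (hd : convexHull ℝ ((closedBall (0 : E →L[ℝ] ℝ) 1).extremePoints ℝ)
      = closedBall (0 : E →L[ℝ] ℝ) 1)
    (w : E) (c : ℝ)
    (h : ∀ f ∈ (closedBall (0 : E →L[ℝ] ℝ) 1).extremePoints ℝ, f w ≤ c) : ‖w‖ ≤ c := by
  have hlin : IsLinearMap ℝ (fun f : E →L[ℝ] ℝ => f w) :=
    ⟨fun a b => rfl, fun r a => rfl⟩
  have hball : ∀ f ∈ closedBall (0 : E →L[ℝ] ℝ) 1, f w ≤ c := by
    rw [← hd]
    exact convexHull_min h (convex_halfSpace_le hlin c)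
  by_cases hw : w = 0
  · have h0 : (0 : E →L[ℝ] ℝ) ∈ closedBall (0 : E →L[ℝ] ℝ) 1 := by
      simp [mem_closedBall_zero_iff]
    have := hball 0 h0
    simp only [ContinuousLinearMap.zero_apply] at this
    simp [hw, this]
  · obtain ⟨g, hg1, hgw⟩ := exists_dual_vector ℝ w (norm_ne_zero_iff.2 hw)
    have hgball : g ∈ closedBall (0 : E →L[ℝ] ℝ) 1 := by
      simp [mem_closedBall_zero_iff, hg1]
    have := hball g hgball
    simp only [RCLike.ofReal_real_eq_id, id] at hgw
    linarith [hgw ▸ this]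

lemma exists_ext_dual {E : Type*} [NormedAddCommGroup E] [NormedSpace ℝ E]
    (hd : convexHull ℝ ((closedBall (0 : E →L[ℝ] ℝ) 1).extremePoints ℝ)
      = closedBall (0 : E →L[ℝ] ℝ) 1)
    (hfin : ((closedBall (0 : E →L[ℝ] ℝ) 1).extremePoints ℝ).Finite)
    (w : E) : ∃ f ∈ (closedBall (0 : E →L[ℝ] ℝ) 1).extremePoints ℝ, f w = ‖w‖ := by
  classical
  have hne : ((closedBall (0 : E →L[ℝ] ℝ) 1).extremePoints ℝ).Nonempty := by
    by_contra hne
    rw [Set.not_nonempty_iff_eq_empty] at hne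
    rw [hne, convexHull_empty] at hd
    have : (0 : E →L[ℝ] ℝ) ∈ closedBall (0 : E →L[ℝ] ℝ) 1 := by
      simp [mem_closedBall_zero_iff]
    rw [← hd] at this
    exact this
  set F := hfin.toFinset with hF
  have hFne : F.Nonempty := by rwa [hF, Set.Finite.toFinset_nonempty]
  obtain ⟨f, hfF, hfmax⟩ := F.exists_mem_eq_sup' hFne (fun f => f w)
  have hfext : f ∈ (closedBall (0 : E →L[ℝ] ℝ) 1).extremePoints ℝ := by
    rwa [hF, Set.Finite.mem_toFinset] at hfF
  refine ⟨f, hfext, le_antisymm ?_ ?_⟩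
  · have hfball : ‖f‖ ≤ 1 := by
      have := extremePoints_subset hfext
      rwa [mem_closedBall_zero_iff] at this
    calc f w ≤ |f w| := le_abs_self _
      _ ≤ ‖f‖ * ‖w‖ := f.le_opNorm w
      _ ≤ 1 * ‖w‖ := mul_le_mul_of_nonneg_right hfball (norm_nonneg _)
      _ = ‖w‖ := one_mul _
  · refine norm_le_dual hd w (f w) (fun g hg => ?_)
    rw [← hfmax]
    have hgF : g ∈ F := by rwa [hF, Set.Finite.mem_toFinset]
    exact Finset.le_sup' (fun f : E →L[ℝ] ℝ => f w) hgF

lemma opnorm_le_ext {E : Type*} [NormedAddCommGroup E] [NormedSpace ℝ E]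
    (hX : convexHull ℝ ((closedBall (0:E) 1).extremePoints ℝ) = closedBall (0:E) 1)
    (hd : convexHull ℝ ((closedBall (0 : E →L[ℝ] ℝ) 1).extremePoints ℝ)
      = closedBall (0 : E →L[ℝ] ℝ) 1)
    (Q : E →L[ℝ] E) (c : ℝ)
    (h : ∀ x ∈ (closedBall (0:E) 1).extremePoints ℝ,
      ∀ f ∈ (closedBall (0 : E →L[ℝ] ℝ) 1).extremePoints ℝ, f (Q x) ≤ c) : ‖Q‖ ≤ c := by
  have step1 : ∀ x ∈ (closedBall (0:E) 1).extremePoints ℝ, ‖Q x‖ ≤ c :=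
    fun x hx => norm_le_dual hd _ c (fun f hf => h x hx f hf)
  have hconv : Convex ℝ {x : E | ‖Q x‖ ≤ c} := by
    have : {x : E | ‖Q x‖ ≤ c} = (Q : E →ₗ[ℝ] E) ⁻¹' closedBall 0 c := by
      ext x; simp [mem_closedBall_zero_iff]
    rw [this]
    exact (convex_closedBall _ _).linear_preimage _
  have step2 : ∀ x ∈ closedBall (0:E) 1, ‖Q x‖ ≤ c := by
    rw [← hX]
    exact convexHull_min step1 hconv
  have hc : 0 ≤ c := by
    have := step2 0 (by simp [mem_closedBall_zero_iff])
    simpa using this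
  refine Q.opNorm_le_of_unit_norm hc (fun x hx => ?_)
  exact step2 x (by simp [mem_closedBall_zero_iff, hx.le])

/-- The space of operators `D` with range in `Y` vanishing on `Y`. -/
def Vsub (Y : Submodule ℝ X) : Submodule ℝ (X →L[ℝ] X) where
  carrier := {D | (∀ x, D x ∈ Y) ∧ ∀ y ∈ Y, D y = 0}
  add_mem' := by
    intro a b ha hb
    exact ⟨fun x => Y.add_mem (ha.1 x) (hb.1 x), fun y hy => by
      simp [ContinuousLinearMap.add_apply, ha.2 y hy, hb.2 y hy]⟩
  zero_mem' := ⟨fun x => Y.zero_mem, fun y hy => rfl⟩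
  smul_mem' := by
    intro c a ha
    exact ⟨fun x => Y.smul_mem c (ha.1 x), fun y hy => by
      simp [ContinuousLinearMap.smul_apply, ha.2 y hy]⟩

lemma mem_Vsub {Y : Submodule ℝ X} {D : X →L[ℝ] X} :
    D ∈ Vsub Y ↔ (∀ x, D x ∈ Y) ∧ ∀ y ∈ Y, D y = 0 := Iff.rfl

lemma finrank_Vsub_ge [FiniteDimensional ℝ X] (Y : Submodule ℝ X) :
    finrank ℝ Y * (finrank ℝ X - finrank ℝ Y) ≤ finrank ℝ (Vsub Y) := by
  haveI : FiniteDimensional ℝ (X →L[ℝ] X) :=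
    (LinearMap.toContinuousLinearMap : (X →ₗ[ℝ] X) ≃ₗ[ℝ] (X →L[ℝ] X)).finiteDimensional
  obtain ⟨Z, hZ⟩ := Y.exists_isCompl
  set pr : X →ₗ[ℝ] Z := Z.linearProjOfIsCompl Y hZ.symm with hpr
  set ι : (Z →ₗ[ℝ] Y) →ₗ[ℝ] (X →L[ℝ] X) :=
    { toFun := fun g => LinearMap.toContinuousLinearMap (Y.subtype ∘ₗ (g ∘ₗ pr))
      map_add' := by
        intro a b
        apply ContinuousLinearMap.ext
        intro x
        simp [LinearMap.coe_toContinuousLinearMap']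
      map_smul' := by
        intro c a
        apply ContinuousLinearMap.ext
        intro x
        simp [LinearMap.coe_toContinuousLinearMap'] } with hι
  have hιmem : ∀ g, ι g ∈ Vsub Y := by
    intro g
    constructor
    · intro x
      simp [hι, LinearMap.coe_toContinuousLinearMap']
    · intro y hy
      have : pr y = 0 := Submodule.linearProjOfIsCompl_apply_right' hZ.symm hy
      simp [hι, LinearMap.coe_toContinuousLinearMap', this]
  set ι' : (Z →ₗ[ℝ] Y) →ₗ[ℝ] (Vsub Y) := ι.codRestrict (Vsub Y) hιmem with hι'
  have hinj : Function.Injective ι' := by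
    intro a b hab
    ext z
    have h1 : ι a = ι b := congrArg (Submodule.subtype (Vsub Y)) hab
    have h2 := congrArg (fun (T : X →L[ℝ] X) => T (z : X)) h1
    simp only [hι, LinearMap.coe_mk, AddHom.coe_mk, LinearMap.coe_toContinuousLinearMap',
      LinearMap.comp_apply, Submodule.coe_subtype] at h2
    have hz : pr (z : X) = z := Submodule.linearProjOfIsCompl_apply_left hZ.symm z
    rw [hz] at h2
    exact h2
  have := LinearMap.finrank_le_finrank_of_injective hinj
  have hZrank : finrank ℝ Z = finrank ℝ X - finrank ℝ Y := by
    have := Submodule.finrank_add_eq_of_isCompl hZ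
    omega
  rwa [Module.finrank_linearMap, hZrank, Nat.mul_comm] at this

/-- In an `n`-dimensional polyhedral space, if some minimal projection `P₀` onto a
`k`-dimensional subspace `Y` has at most `m` norming pairs
`(x, f) ∈ ext B_X × ext B_{X*}` (with `f (P₀ x) = ‖P₀‖`), then the affine dimension of
the set of minimal projections is at least `k(n-k) - m + 1`. -/
theorem adim_minProjSet_ge [FiniteDimensional ℝ X] (hpoly : IsPolyhedralSpace X)
    {n k : ℕ} (hn : finrank ℝ X = n) (Y : Submodule ℝ X) (hk : finrank ℝ Y = k)
    (hk1 : 1 ≤ k) (hkn : k ≤ n - 1)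
    (P₀ : X →L[ℝ] X) (hP₀ : P₀ ∈ MinProjSet Y) (m : ℕ)
    (hm : ∀ s : Finset (X × (X →L[ℝ] ℝ)),
      (∀ p ∈ s, p.1 ∈ Set.extremePoints ℝ (closedBall (0 : X) 1) ∧
        p.2 ∈ Set.extremePoints ℝ (closedBall (0 : X →L[ℝ] ℝ) 1) ∧
        p.2 (P₀ p.1) = ‖P₀‖) → s.card ≤ m) :
    k * (n - k) + 1 ≤ adim (MinProjSet Y) + m := by
  classical
  obtain ⟨s, hs⟩ := hpoly
  haveI : FiniteDimensional ℝ (X →L[ℝ] ℝ) :=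
    (LinearMap.toContinuousLinearMap : (X →ₗ[ℝ] ℝ) ≃ₗ[ℝ] (X →L[ℝ] ℝ)).finiteDimensional
  haveI : FiniteDimensional ℝ (X →L[ℝ] X) :=
    (LinearMap.toContinuousLinearMap : (X →ₗ[ℝ] X) ≃ₗ[ℝ] (X →L[ℝ] X)).finiteDimensional
  set EX := (closedBall (0:X) 1).extremePoints ℝ with hEX
  set ED := (closedBall (0 : X →L[ℝ] ℝ) 1).extremePoints ℝ with hED
  have finEX : EX.Finite := by
    refine Set.Finite.subset s.finite_toSet ?_
    rw [hEX, hs]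
    exact extremePoints_convexHull_subset
  have finED : ED.Finite := dual_extremePoints_finite hs
  have hXh : convexHull ℝ EX = closedBall (0:X) 1 :=
    hull_extremePoints' (isCompact_closedBall _ _) (convex_closedBall _ _) finEX
  have hdh : convexHull ℝ ED = closedBall (0 : X →L[ℝ] ℝ) 1 :=
    hull_extremePoints' (isCompact_closedBall _ _) (convex_closedBall _ _) finED
  -- basic facts about the relative projection constant
  have hbdd : BddBelow {c | ∃ P : X →L[ℝ] X, IsProjOnto Y P ∧ ‖P‖ = c} := by
    refine ⟨0, fun c hc => ?_⟩
    obtain ⟨P, _, hP⟩ := hc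
    exact hP ▸ norm_nonneg P
  have hle : ∀ Q : X →L[ℝ] X, IsProjOnto Y Q → relProjConst Y ≤ ‖Q‖ :=
    fun Q hQ => csInf_le hbdd ⟨Q, hQ, rfl⟩
  -- a bound used repeatedly: `f (P₀ x) ≤ ‖P₀‖` for extreme pairs
  have hpair_le : ∀ x ∈ EX, ∀ f ∈ ED, f (P₀ x) ≤ ‖P₀‖ := by
    intro x hx f hf
    have hxb : ‖x‖ ≤ 1 := by
      have := extremePoints_subset hx; rwa [mem_closedBall_zero_iff] at this
    have hfb : ‖f‖ ≤ 1 := by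
      have := extremePoints_subset hf; rwa [mem_closedBall_zero_iff] at this
    calc f (P₀ x) ≤ |f (P₀ x)| := le_abs_self _
      _ ≤ ‖f‖ * ‖P₀ x‖ := f.le_opNorm _
      _ ≤ 1 * ‖P₀ x‖ := mul_le_mul_of_nonneg_right hfb (norm_nonneg _)
      _ = ‖P₀ x‖ := one_mul _
      _ ≤ ‖P₀‖ * ‖x‖ := P₀.le_opNorm x
      _ ≤ ‖P₀‖ * 1 := mul_le_mul_of_nonneg_left hxb (norm_nonneg _)
      _ = ‖P₀‖ := mul_one _
  -- existence of a norming pair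
  have hx0 : ∃ x ∈ EX, ‖P₀ x‖ = ‖P₀‖ := by
    have hEXne : EX.Nonempty := by
      by_contra hne
      rw [Set.not_nonempty_iff_eq_empty] at hne
      rw [hne, convexHull_empty] at hXh
      have h0 : (0:X) ∈ closedBall (0:X) 1 := by simp [mem_closedBall_zero_iff]
      rw [← hXh] at h0
      exact h0
    set F := finEX.toFinset with hF
    have hFne : F.Nonempty := by rwa [hF, Set.Finite.toFinset_nonempty]
    obtain ⟨x, hxF, hmax⟩ := F.exists_mem_eq_sup' hFne (fun x => ‖P₀ x‖)
    have hxEX : x ∈ EX := by rwa [hF, Set.Finite.mem_toFinset] at hxF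
    refine ⟨x, hxEX, le_antisymm ?_ ?_⟩
    · have hxb : ‖x‖ ≤ 1 := by
        have := extremePoints_subset hxEX; rwa [mem_closedBall_zero_iff] at this
      calc ‖P₀ x‖ ≤ ‖P₀‖ * ‖x‖ := P₀.le_opNorm x
        _ ≤ ‖P₀‖ * 1 := mul_le_mul_of_nonneg_left hxb (norm_nonneg _)
        _ = ‖P₀‖ := mul_one _
    · refine opnorm_le_ext hXh hdh P₀ (‖P₀ x‖) (fun z hz f hf => ?_)
      have h1 : f (P₀ z) ≤ ‖P₀ z‖ := by
        have hfb : ‖f‖ ≤ 1 := by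
          have := extremePoints_subset hf; rwa [mem_closedBall_zero_iff] at this
        calc f (P₀ z) ≤ |f (P₀ z)| := le_abs_self _
          _ ≤ ‖f‖ * ‖P₀ z‖ := f.le_opNorm _
          _ ≤ 1 * ‖P₀ z‖ := mul_le_mul_of_nonneg_right hfb (norm_nonneg _)
          _ = ‖P₀ z‖ := one_mul _
      have h2 : ‖P₀ z‖ ≤ ‖P₀ x‖ := by
        rw [← hmax]
        have hzF : z ∈ F := by rwa [hF, Set.Finite.mem_toFinset]
        exact Finset.le_sup' (fun x : X => ‖P₀ x‖) hzF
      linarith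
  obtain ⟨x₀, hx₀EX, hx₀⟩ := hx0
  obtain ⟨f₀, hf₀ED, hf₀⟩ := exists_ext_dual hdh finED (P₀ x₀)
  -- the finset of norming pairs
  set prodF : Finset (X × (X →L[ℝ] ℝ)) := finEX.toFinset ×ˢ finED.toFinset with hprodF
  obtain ⟨Npairs, hNmem⟩ : ∃ N : Finset (X × (X →L[ℝ] ℝ)),
      ∀ p : X × (X →L[ℝ] ℝ), p ∈ N ↔ p.1 ∈ EX ∧ p.2 ∈ ED ∧ p.2 (P₀ p.1) = ‖P₀‖ := by
    refine ⟨prodF.filter (fun p => p.2 (P₀ p.1) = ‖P₀‖), fun p => ?_⟩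
    rw [Finset.mem_filter, hprodF, Finset.mem_product,
      Set.Finite.mem_toFinset, Set.Finite.mem_toFinset]
    tauto
  have hNcard : Npairs.card ≤ m := by
    refine hm Npairs (fun p hp => ?_)
    rw [hNmem] at hp
    exact ⟨hp.1, hp.2.1, hp.2.2⟩
  have hNne : Npairs.Nonempty :=
    ⟨(x₀, f₀), (hNmem _).2 ⟨hx₀EX, hf₀ED, by rw [hf₀, hx₀]⟩⟩
  -- the perturbation bound
  have bound : ∀ D : X →L[ℝ] X, D ∈ Vsub Y → ∀ r : ℝ, -1 ≤ r → r ≤ 0 →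
      (∀ p ∈ Npairs, p.2 (D p.1) = r) →
      ∃ ε : ℝ, 0 < ε ∧ ‖P₀ + ε • D‖ ≤ ‖P₀‖ + ε * r ∧ IsProjOnto Y (P₀ + ε • D) := by
    intro D hD r hr1 hr0 hvals
    obtain ⟨ε, hε, hεlt⟩ := aux_eps' (prodF \ Npairs)
      (fun p => ‖P₀‖ - p.2 (P₀ p.1)) (fun p => p.2 (D p.1) + 1) (by
        intro p hp
        rw [Finset.mem_sdiff] at hp
        obtain ⟨hp1, hp2⟩ := hp
        rw [hprodF, Finset.mem_product, Set.Finite.mem_toFinset,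
          Set.Finite.mem_toFinset] at hp1
        have hle' := hpair_le p.1 hp1.1 p.2 hp1.2
        rcases lt_or_eq_of_le hle' with h | h
        · linarith
        · exact absurd ((hNmem p).2 ⟨hp1.1, hp1.2, h⟩) hp2)
    refine ⟨ε, hε, ?_, ?_⟩
    · refine opnorm_le_ext hXh hdh _ _ (fun x hx f hf => ?_)
      have happ : f ((P₀ + ε • D) x) = f (P₀ x) + ε * f (D x) := by
        rw [ContinuousLinearMap.add_apply, map_add, ContinuousLinearMap.smul_apply,
          map_smul, smul_eq_mul]
      by_cases hp : (x, f) ∈ Npairs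
      · have h1 : f (P₀ x) = ‖P₀‖ := ((hNmem _).1 hp).2.2
        have h2 : f (D x) = r := hvals _ hp
        rw [happ, h1, h2]
      · have hpmem : (x, f) ∈ prodF \ Npairs := by
          rw [Finset.mem_sdiff, hprodF, Finset.mem_product,
            Set.Finite.mem_toFinset, Set.Finite.mem_toFinset]
          exact ⟨⟨hx, hf⟩, hp⟩
        have h3 := hεlt _ hpmem
        dsimp only at h3
        have h4 : -ε ≤ ε * r := by nlinarith
        rw [happ]
        nlinarith
    · constructor
      · intro x
        exact Y.add_mem (hP₀.1.1 x) (Y.smul_mem ε (hD.1 x))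
      · intro y hy
        rw [ContinuousLinearMap.add_apply, ContinuousLinearMap.smul_apply,
          hD.2 y hy, smul_zero, add_zero]
        exact hP₀.1.2 y hy
  -- the evaluation map on the perturbation space
  obtain ⟨Φ, hΦdef⟩ : ∃ Φ : (Vsub Y) →ₗ[ℝ] ({q : X × (X →L[ℝ] ℝ) // q ∈ Npairs} → ℝ),
      ∀ (D : Vsub Y) (p : {q : X × (X →L[ℝ] ℝ) // q ∈ Npairs}),
        Φ D p = p.1.2 ((D : X →L[ℝ] X) p.1.1) := by
    refine ⟨{ toFun := fun D p => p.1.2 ((D : X →L[ℝ] X) p.1.1)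
              map_add' := by
                intro a b
                funext p
                simp [ContinuousLinearMap.add_apply]
              map_smul' := by
                intro c a
                funext p
                simp [ContinuousLinearMap.smul_apply] }, fun D p => rfl⟩
  -- Φ is not surjective
  have hΦne : LinearMap.range Φ ≠ ⊤ := by
    intro htop
    have hmem : (fun _ => (-1 : ℝ)) ∈ LinearMap.range Φ := by rw [htop]; trivial
    obtain ⟨D, hD⟩ := hmem
    obtain ⟨ε, hε, hb, hproj⟩ := bound (D : X →L[ℝ] X) D.2 (-1) le_rfl (by norm_num)
      (fun p hp => by
        have h0 := congrFun hD (⟨p, hp⟩ : {q : X × (X →L[ℝ] ℝ) // q ∈ Npairs})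
        rw [hΦdef] at h0
        exact h0)
    have h1 : relProjConst Y ≤ ‖P₀ + ε • (D : X →L[ℝ] X)‖ := hle _ hproj
    have h2 : ‖P₀‖ = relProjConst Y := hP₀.2
    nlinarith
  -- the kernel of Φ lands in the direction of the affine span
  have hdir : ∀ D : X →L[ℝ] X, D ∈ Vsub Y → (∀ p ∈ Npairs, p.2 (D p.1) = 0) →
      D ∈ (affineSpan ℝ (MinProjSet Y)).direction := by
    intro D hDV hvals
    obtain ⟨ε, hε, hb, hproj⟩ := bound D hDV 0 (by norm_num) le_rfl hvals
    rw [mul_zero, add_zero] at hb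
    have hmem : P₀ + ε • D ∈ MinProjSet Y := by
      refine ⟨hproj, le_antisymm ?_ (hle _ hproj)⟩
      rw [← hP₀.2]
      exact hb
    have h1 : (P₀ + ε • D) -ᵥ P₀ ∈ (affineSpan ℝ (MinProjSet Y)).direction :=
      AffineSubspace.vsub_mem_direction (subset_affineSpan ℝ _ hmem)
        (subset_affineSpan ℝ _ hP₀)
    rw [vsub_eq_sub, add_sub_cancel_left] at h1
    have h2 := (affineSpan ℝ (MinProjSet Y)).direction.smul_mem ε⁻¹ h1
    rwa [smul_smul, inv_mul_cancel₀ hε.ne', one_smul] at h2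
  -- dimension counting
  have hker_le : (LinearMap.ker Φ).map (Vsub Y).subtype
      ≤ (affineSpan ℝ (MinProjSet Y)).direction := by
    rintro D ⟨D', hker, rfl⟩
    refine hdir _ D'.2 (fun p hp => ?_)
    have hker0 : Φ D' = 0 := hker
    have h0 := congrFun hker0 (⟨p, hp⟩ : {q : X × (X →L[ℝ] ℝ) // q ∈ Npairs})
    rw [hΦdef] at h0
    exact h0
  have hrange : finrank ℝ (LinearMap.range Φ) + 1 ≤ Npairs.card := by
    have h1 : finrank ℝ (LinearMap.range Φ)
        < finrank ℝ ({q : X × (X →L[ℝ] ℝ) // q ∈ Npairs} → ℝ) :=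
      Submodule.finrank_lt hΦne
    have h2 : finrank ℝ ({q : X × (X →L[ℝ] ℝ) // q ∈ Npairs} → ℝ) = Npairs.card := by
      rw [Module.finrank_pi, Fintype.card_coe]
    omega
  have hrn : finrank ℝ (LinearMap.range Φ) + finrank ℝ (LinearMap.ker Φ)
      = finrank ℝ (Vsub Y) := LinearMap.finrank_range_add_finrank_ker Φ
  have hkerdir : finrank ℝ (LinearMap.ker Φ) ≤ adim (MinProjSet Y) := by
    have h1 : finrank ℝ ((LinearMap.ker Φ).map (Vsub Y).subtype)
        = finrank ℝ (LinearMap.ker Φ) := Submodule.finrank_map_subtype_eq _ _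
    have h2 := Submodule.finrank_mono hker_le
    rw [h1] at h2
    exact h2
  have hV : k * (n - k) ≤ finrank ℝ (Vsub Y) := by
    have := finrank_Vsub_ge Y
    rwa [hk, hn] at this
  omega
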